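/- Let G be a connected multigraph with minimum degree at least 2. If G contains a connected factor F such that deg_F(v) < deg_G(v) for every vertex v, then G has the strong parity property. -/

import Mathlib

open SimpleGraph

open scoped symmDiff

/-- The degree of `v` in `H`, defined as the cardinality of its neighbor set. -/
noncomputable def edeg {V : Type*} (H : SimpleGraph V) (v : V) : ℕ := (H.neighborSet v).ncard

/-- A factor of `G`: a spanning subgraph with all degrees at least 1. -/
def IsFactor {V : Type*} (G H : SimpleGraph V) : Prop :=
  H ≤ G ∧ ∀ v, 1 ≤ edeg H v

/-- An `X`-parity-factor of `G`: a factor whose odd-degree vertices are exactly `X`. -/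
def IsParityFactor {V : Type*} (G H : SimpleGraph V) (X : Set V) : Prop :=
  IsFactor G H ∧ ∀ v, (Odd (edeg H v) ↔ v ∈ X)

/-- `G` has the strong parity property if every even-sized vertex subset
admits an `X`-parity-factor. -/
def StrongParity {V : Type*} (G : SimpleGraph V) : Prop :=
  ∀ X : Set V, Even X.ncard → ∃ H, IsParityFactor G H X

/-- Parity of the cardinality of a symmetric difference. -/
lemma even_ncard_symmDiff {α : Type*} (S T : Set α) (hS : S.Finite) (hT : T.Finite) :
    Even ((S ∆ T).ncard) ↔ (Even S.ncard ↔ Even T.ncard) := by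
  have h1 : S ∆ T = (S ∪ T) \ (S ∩ T) := by
    rw [symmDiff_eq_sup_sdiff_inf]; rfl
  have hsub : S ∩ T ⊆ S ∪ T := fun x hx => Or.inl hx.1
  have h2 : ((S ∪ T) \ (S ∩ T)).ncard = (S ∪ T).ncard - (S ∩ T).ncard :=
    Set.ncard_diff hsub (hS.inter_of_left T)
  have hle : (S ∩ T).ncard ≤ (S ∪ T).ncard :=
    Set.ncard_le_ncard hsub (hS.union hT)
  have h3 := Set.ncard_union_add_ncard_inter S T hS hT
  rw [h1, h2, Nat.even_sub hle, ← Nat.even_add, h3, Nat.even_add]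

lemma symmDiff_adj' {V : Type*} (A B : SimpleGraph V) (x y : V) :
    (A ∆ B).Adj x y ↔ (A.Adj x y ∧ ¬B.Adj x y) ∨ (B.Adj x y ∧ ¬A.Adj x y) := by
  rw [symmDiff_def]
  simp [sdiff_adj]

lemma neighborSet_symmDiff {V : Type*} (A B : SimpleGraph V) (v : V) :
    (A ∆ B).neighborSet v = (A.neighborSet v) ∆ (B.neighborSet v) := by
  ext u
  simp only [mem_neighborSet, Set.mem_symmDiff, symmDiff_adj']

/-- Flipping by a single edge flips degree parity exactly at the two endpoints. -/
lemma odd_edeg_symmDiff_edge {V : Type*} [Fintype V] (J : SimpleGraph V) {a c : V}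
    (hac : a ≠ c) (v : V) :
    Odd (edeg (J ∆ (fromEdgeSet {s(a,c)})) v) ↔
      Xor' (Odd (edeg J v)) (Xor' (v = a) (v = c)) := by
  classical
  set e := fromEdgeSet ({s(a,c)} : Set (Sym2 V)) with he
  have key : Even (edeg (J ∆ e) v) ↔ (Even (edeg J v) ↔ Even (edeg e v)) := by
    unfold edeg
    rw [neighborSet_symmDiff]
    exact even_ncard_symmDiff _ _ (Set.toFinite _) (Set.toFinite _)
  have hoj : Odd (edeg J v) ↔ ¬ Even (edeg J v) := Nat.not_even_iff_odd.symm
  have hov : Odd (edeg (J ∆ e) v) ↔ ¬ Even (edeg (J ∆ e) v) := Nat.not_even_iff_odd.symm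
  rw [hov, key]
  have hE1 : ¬ Even (1 : ℕ) := by decide
  have hE0 : Even (0 : ℕ) := by decide
  by_cases h1 : v = a
  · subst h1
    have hNa : e.neighborSet v = {c} := by
      ext u
      simp only [mem_neighborSet, he, fromEdgeSet_adj, Set.mem_singleton_iff, Sym2.eq_iff]
      aesop
    have hdeg : edeg e v = 1 := by rw [edeg, hNa, Set.ncard_singleton]
    rw [hdeg]
    have haa : v = v := rfl
    have hac' : ¬ (v = c) := hac
    unfold Xor' Xor
    tauto
  · by_cases h2 : v = c
    · subst h2
      have hNc : e.neighborSet v = {a} := by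
        ext u
        simp only [mem_neighborSet, he, fromEdgeSet_adj, Set.mem_singleton_iff, Sym2.eq_iff]
        aesop
      have hdeg : edeg e v = 1 := by rw [edeg, hNc, Set.ncard_singleton]
      rw [hdeg]
      have hcc : v = v := rfl
      unfold Xor' Xor
      tauto
    · have hN0 : e.neighborSet v = ∅ := by
        ext u
        simp only [mem_neighborSet, he, fromEdgeSet_adj, Set.mem_singleton_iff, Sym2.eq_iff,
          Set.mem_empty_iff_false, iff_false]
        rintro ⟨(⟨rfl, rfl⟩ | ⟨rfl, rfl⟩), hne⟩
        · exact h1 rfl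
        · exact h2 rfl
      have hdeg : edeg e v = 0 := by rw [edeg, hN0, Set.ncard_empty]
      rw [hdeg]
      unfold Xor' Xor
      tauto

/-- Walking from `a` to `b`, we can flip the degree parities exactly at `a` and `b`. -/
lemma walk_flip {V : Type*} [Fintype V] {F : SimpleGraph V} {a b : V} (p : F.Walk a b) :
    ∀ J : SimpleGraph V, J ≤ F → ∃ J₂, J₂ ≤ F ∧
      ∀ v, Odd (edeg J₂ v) ↔ Xor' (Odd (edeg J v)) (Xor' (v = a) (v = b)) := by
  induction p with
  | nil =>
    intro J hJ
    exact ⟨J, hJ, fun v => by simp [Xor', Xor]⟩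
  | @cons a c b h p ih =>
    intro J hJ
    set e := fromEdgeSet ({s(a,c)} : Set (Sym2 V)) with he
    have heF : e ≤ F := by
      intro x y hxy
      rw [he, fromEdgeSet_adj] at hxy
      obtain ⟨hmem, -⟩ := hxy
      rw [Set.mem_singleton_iff, Sym2.eq_iff] at hmem
      rcases hmem with ⟨rfl, rfl⟩ | ⟨rfl, rfl⟩
      · exact h
      · exact h.symm
    have hJ1 : J ∆ e ≤ F := le_trans symmDiff_le_sup (sup_le hJ heF)
    obtain ⟨J₂, hJ₂F, hJ₂⟩ := ih (J ∆ e) hJ1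
    refine ⟨J₂, hJ₂F, fun v => ?_⟩
    have h1 := odd_edeg_symmDiff_edge J h.ne v
    rw [hJ₂ v, h1]
    unfold Xor' Xor
    by_cases hva : v = a <;> by_cases hvc : v = c <;> by_cases hvb : v = b <;>
      simp_all <;> tauto

/-- In a connected graph, every even vertex subset is realizable as the odd-degree
set of some subgraph. -/
lemma exists_parity_subgraph {V : Type*} [Fintype V] {F : SimpleGraph V} (hF : F.Connected) :
    ∀ n (D : Set V), D.ncard = n → Even n → ∃ J, J ≤ F ∧ ∀ v, Odd (edeg J v) ↔ v ∈ D := by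
  intro n
  induction n using Nat.strong_induction_on with
  | _ n ih =>
    intro D hcard heven
    rcases Nat.eq_zero_or_pos n with h0 | hpos
    · subst h0
      rw [Set.ncard_eq_zero (Set.toFinite D)] at hcard
      subst hcard
      refine ⟨⊥, bot_le, fun v => ?_⟩
      have h0 : edeg (⊥ : SimpleGraph V) v = 0 := by
        have : (⊥ : SimpleGraph V).neighborSet v = ∅ := by ext u; simp
        rw [edeg, this, Set.ncard_empty]
      simp [h0]
    · -- n ≥ 2
      obtain ⟨a, ha⟩ : D.Nonempty := by
        rw [← Set.ncard_pos (Set.toFinite D), hcard]; exact hpos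
      have h2 : 2 ≤ n := by
        rcases heven with ⟨k, hk⟩; omega
      obtain ⟨b, hb⟩ : (D \ {a}).Nonempty := by
        rw [← Set.ncard_pos (Set.toFinite _), Set.ncard_diff_singleton_of_mem ha, hcard]
        omega
      obtain ⟨hbD, hba⟩ := hb
      rw [Set.mem_singleton_iff] at hba
      have hab : a ≠ b := fun h => hba h.symm
      set D' := D \ {a, b} with hD'
      have hsub : ({a, b} : Set V) ⊆ D := by
        intro x hx; rcases hx with rfl | rfl
        · exact ha
        · exact hbD
      have hcard' : D'.ncard = n - 2 := by
        rw [hD', Set.ncard_diff hsub, Set.ncard_pair hab, hcard]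
      have heven' : Even (n - 2) := by
        rcases heven with ⟨k, hk⟩; exact ⟨k - 1, by omega⟩
      obtain ⟨J', hJ'F, hJ'⟩ := ih (n - 2) (by omega) D' hcard' heven'
      obtain ⟨p⟩ := hF.preconnected a b
      obtain ⟨J, hJF, hJ⟩ := walk_flip p J' hJ'F
      refine ⟨J, hJF, fun v => ?_⟩
      rw [hJ v, hJ' v]
      have hmem : v ∈ D' ↔ v ∈ D ∧ ¬(v = a) ∧ ¬(v = b) := by
        simp [hD', Set.mem_diff]
      rw [hmem]
      unfold Xor' Xor
      by_cases hva : v = a <;> by_cases hvb : v = b <;> simp_all <;> tauto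

lemma edeg_eq_degree {V : Type*} [Fintype V] (H : SimpleGraph V) [DecidableRel H.Adj] (v : V) :
    edeg H v = H.degree v := by
  rw [edeg, ← Nat.card_coe_set_eq, Nat.card_eq_fintype_card,
    card_neighborSet_eq_degree]

lemma odd_sub_iff (b j : ℕ) (h : j ≤ b) (R : Prop)
    (hJ : Odd j ↔ ((Odd b ∧ ¬R) ∨ (R ∧ ¬Odd b))) : Odd (b - j) ↔ R := by
  have hob : Odd b ↔ ¬ Even b := Nat.not_even_iff_odd.symm
  have hoj : Odd j ↔ ¬ Even j := Nat.not_even_iff_odd.symm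
  rw [← Nat.not_even_iff_odd, Nat.even_sub h]
  tauto

theorem connected_factor_implies_strong_parity {V : Type*} [Fintype V]
    (G : SimpleGraph V) (hG : G.Connected) (hδ : ∀ v, 2 ≤ edeg G v)
    (F : SimpleGraph V) (hF : IsFactor G F) (hFconn : F.Connected)
    (hFdeg : ∀ v, edeg F v < edeg G v) :
    StrongParity G := by
  classical
  intro X hX
  -- choose a non-F edge at every vertex
  have hw : ∀ v, ∃ u, G.Adj v u ∧ ¬ F.Adj v u := by
    intro v
    by_contra h
    push_neg at h
    have hsub : G.neighborSet v ⊆ F.neighborSet v := fun u hu => h u hu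
    have := Set.ncard_le_ncard hsub (Set.toFinite _)
    exact absurd (lt_of_lt_of_le (hFdeg v) this) (lt_irrefl _)
  choose w hw1 hw2 using hw
  -- the graph of chosen extra edges
  let M : SimpleGraph V :=
    { Adj := fun x y => x ≠ y ∧ (y = w x ∨ x = w y)
      symm := ⟨fun x y ⟨hne, h⟩ => ⟨hne.symm, h.symm⟩⟩
      loopless := ⟨fun x h => h.1 rfl⟩ }
  have hMG : M ≤ G := by
    intro x y ⟨hne, h⟩
    rcases h with rfl | rfl
    · exact hw1 x
    · exact (hw1 y).symm
  have hMF : ∀ x y, M.Adj x y → ¬ F.Adj x y := by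
    intro x y ⟨hne, h⟩ hf
    rcases h with rfl | rfl
    · exact hw2 x hf
    · exact hw2 y hf.symm
  set B := F ⊔ M with hB
  have hBG : B ≤ G := sup_le hF.1 hMG
  have hFB : ∀ v, edeg F v < edeg B v := by
    intro v
    have hmemB : w v ∈ B.neighborSet v := by
      right
      exact ⟨(hw1 v).ne, Or.inl rfl⟩
    have hsub : F.neighborSet v ⊆ B.neighborSet v := fun u hu => Or.inl hu
    exact Set.ncard_lt_ncard
      ((Set.ssubset_iff_of_subset hsub).2 ⟨w v, hmemB, hw2 v⟩) (Set.toFinite _)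
  -- the odd-degree set of B is even-sized
  set OB := {v | Odd (edeg B v)} with hOB
  have hOBeven : Even OB.ncard := by
    have h1 := SimpleGraph.even_card_odd_degree_vertices B
    have h2 : OB = ↑(Finset.univ.filter fun v => Odd (B.degree v)) := by
      ext v
      simp [hOB, edeg_eq_degree]
    rw [h2, Set.ncard_coe_finset]
    exact h1
  set D := OB ∆ X with hD
  have hDeven : Even D.ncard := by
    rw [hD, even_ncard_symmDiff _ _ (Set.toFinite _) (Set.toFinite _)]
    constructor <;> intro <;> [exact hX; exact hOBeven]
  obtain ⟨J, hJF, hJodd⟩ := exists_parity_subgraph hFconn D.ncard D rfl hDeven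
  set H := B \ J with hH
  have hNH : ∀ v, H.neighborSet v = B.neighborSet v \ J.neighborSet v := by
    intro v; ext u; simp [hH, sdiff_adj, mem_neighborSet]
  have hJB : ∀ v, J.neighborSet v ⊆ B.neighborSet v :=
    fun v u hu => Or.inl (hJF hu)
  have hdegH : ∀ v, edeg H v = edeg B v - edeg J v := by
    intro v
    rw [edeg, hNH v, Set.ncard_diff (hJB v) (Set.toFinite _)]
    rfl
  have hJle : ∀ v, edeg J v ≤ edeg F v := by
    intro v
    exact Set.ncard_le_ncard (fun u hu => hJF hu) (Set.toFinite _)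
  refine ⟨H, ⟨⟨le_trans sdiff_le hBG, fun v => ?_⟩, fun v => ?_⟩⟩
  · have := hFB v
    have := hJle v
    rw [hdegH v]
    omega
  · have hle : edeg J v ≤ edeg B v := le_trans (hJle v) (le_of_lt (hFB v))
    have hsub : Even (edeg B v - edeg J v) ↔ (Even (edeg B v) ↔ Even (edeg J v)) :=
      Nat.even_sub hle
    have hDv : v ∈ D ↔ ((Odd (edeg B v) ∧ v ∉ X) ∨ (v ∈ X ∧ ¬ Odd (edeg B v))) := by
      rw [hD, Set.mem_symmDiff]
      simp [hOB]
    have hJv := (hJodd v).trans hDv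
    rw [hdegH v]
    exact odd_sub_iff _ _ hle _ hJv
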